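/- Let f be holomorphic on a domain containing the closed upper half-plane, suppose f'(z) → b₀ ≠ 0 as |z| → ∞ in ℍ, and suppose |f'| ≤ M' on ℍ. Choose R with |f'(z) − b₀| < |b₀|/2 for |z| > R, z ∈ ℍ. Then for T > 4M'/|b₀| + 3: if z₁, z₂ ∈ closure(ℍ) are distinct with |z₂| ≥ TR, then f(z₁) ≠ f(z₂). -/

import Mathlib

open Set Complex Metric MeasureTheory Filter Topology

/-- If `f` is holomorphic on an open set containing the closed upper half-plane,
`|f'| ≤ M'` on `ℍ`, `|f'(z) - b₀| < |b₀|/2` for `z ∈ ℍ` with `|z| > R`, and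
`T > 4M'/|b₀| + 3`, then `f` separates any two distinct points `z₁, z₂` of the closed
upper half-plane with `|z₂| ≥ TR`. -/
theorem separation_far_away (U : Set ℂ) (hU : IsOpen U)
    (hUH : closure {z : ℂ | 0 < z.im} ⊆ U)
    (f : ℂ → ℂ) (hf : DifferentiableOn ℂ f U)
    (b₀ : ℂ) (hb₀ : b₀ ≠ 0) (M' : ℝ) (hM' : 0 < M')
    (hbound : ∀ z : ℂ, 0 < z.im → ‖deriv f z‖ ≤ M')
    (R : ℝ) (hR : 0 < R)
    (hnear : ∀ z : ℂ, 0 < z.im → R < ‖z‖ →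
      ‖deriv f z - b₀‖ < ‖b₀‖ / 2)
    (T : ℝ) (hT : 4 * M' / ‖b₀‖ + 3 < T) :
    ∀ z₁ ∈ closure {z : ℂ | 0 < z.im}, ∀ z₂ ∈ closure {z : ℂ | 0 < z.im},
      z₁ ≠ z₂ → T * R ≤ ‖z₂‖ → f z₁ ≠ f z₂ := by
  intro z₁ hz₁ z₂ hz₂ hne hTR heq
  set S : Set ℂ := {z : ℂ | 0 < z.im} with hSdef
  have hB : (0:ℝ) < ‖b₀‖ := by simpa using norm_pos_iff.mpr hb₀
  set B : ℝ := ‖b₀‖ with hBdef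
  -- analyticity and continuity of the derivative
  have hAn : AnalyticOnNhd ℂ f U := hf.analyticOnNhd hU
  have hdc : ContinuousOn (deriv f) U := hAn.deriv.continuousOn
  -- closure of S consists of points with nonnegative imaginary part
  have hcl : closure S ⊆ {z : ℂ | 0 ≤ z.im} :=
    closure_minimal (fun z hz => le_of_lt (show 0 < z.im from hz))
      (IsClosed.preimage Complex.continuous_im isClosed_Ici)
  -- extended bounds on the closed upper half-plane
  have h1 : ∀ z ∈ closure S, ‖deriv f z‖ ≤ M' := by
    intro z hz
    have hca : ContinuousAt (deriv f) z := hdc.continuousAt (hU.mem_nhds (hUH hz))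
    have him : 0 ≤ z.im := hcl hz
    have htt : Tendsto (fun ε : ℝ => z + (ε : ℂ) * Complex.I) (𝓝[>] 0) (𝓝 z) := by
      have h0 : Tendsto (fun ε : ℝ => z + (ε : ℂ) * Complex.I) (𝓝 0) (𝓝 z) := by
        have hcts : Continuous (fun ε : ℝ => z + (ε : ℂ) * Complex.I) := by fun_prop
        exact hcts.tendsto' 0 z (by simp)
      exact h0.mono_left nhdsWithin_le_nhds
    refine le_of_tendsto ((continuous_norm.tendsto _).comp (hca.tendsto.comp htt)) ?_
    filter_upwards [self_mem_nhdsWithin] with ε (hε : 0 < ε)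
    have : 0 < (z + (ε : ℂ) * Complex.I).im := by
      simp only [Complex.add_im, Complex.mul_im, Complex.ofReal_re, Complex.ofReal_im,
        Complex.I_re, Complex.I_im]
      nlinarith
    simpa using hbound _ this
  have h2 : ∀ z ∈ closure S, R ≤ ‖z‖ → ‖deriv f z - b₀‖ ≤ B / 2 := by
    intro z hz hRz
    have hca : ContinuousAt (deriv f) z := hdc.continuousAt (hU.mem_nhds (hUH hz))
    have him : 0 ≤ z.im := hcl hz
    set w : ℝ → ℂ := fun ε => ((1 + ε : ℝ) : ℂ) * z + ((ε : ℝ) : ℂ) ^ 2 * Complex.I with hw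
    have htt : Tendsto w (𝓝[>] 0) (𝓝 z) := by
      have h0 : Tendsto w (𝓝 0) (𝓝 z) := by
        have hcts : Continuous w := by
          rw [hw]; fun_prop
        exact hcts.tendsto' 0 z (by simp [hw])
      exact h0.mono_left nhdsWithin_le_nhds
    have hcomp : Tendsto (fun ε => ‖deriv f (w ε) - b₀‖) (𝓝[>] 0) (𝓝 ‖deriv f z - b₀‖) := by
      exact ((continuous_norm.tendsto _).comp
        (((hca.tendsto.comp htt).sub tendsto_const_nhds)))
    refine le_of_tendsto hcomp ?_
    filter_upwards [Ioo_mem_nhdsGT hR] with ε hε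
    have hε0 : 0 < ε := hε.1
    have hεR : ε < R := hε.2
    have him' : 0 < (w ε).im := by
      have himeq : (w ε).im = (1 + ε) * z.im + ε ^ 2 := by
        simp [hw, Complex.add_im, Complex.mul_im, ← Complex.ofReal_pow, Complex.ofReal_re,
          Complex.ofReal_im, Complex.I_re, Complex.I_im]
      rw [himeq]
      nlinarith
    have habs : R < ‖w ε‖ := by
      have h1' : ‖((1 + ε : ℝ) : ℂ) * z‖ = (1 + ε) * ‖z‖ := by
        rw [norm_mul, Complex.norm_real, Real.norm_eq_abs,
          abs_of_pos (by linarith : (0:ℝ) < 1 + ε)]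
      have h2' : ‖(((ε : ℝ) : ℂ)) ^ 2 * Complex.I‖ = ε ^ 2 := by
        rw [norm_mul, norm_pow, Complex.norm_real, Real.norm_eq_abs,
          abs_of_pos hε0]
        simp
      have hsub : ‖w ε - (((ε : ℝ) : ℂ)) ^ 2 * Complex.I‖ ≤ ‖w ε‖ + ‖(((ε : ℝ) : ℂ)) ^ 2 * Complex.I‖ :=
        norm_sub_le _ _
      have hweq : w ε - (((ε : ℝ) : ℂ)) ^ 2 * Complex.I = ((1 + ε : ℝ) : ℂ) * z := by
        rw [hw]; ring
      rw [hweq, h1', h2'] at hsub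
      nlinarith
    have := hnear _ him' habs
    simpa [hBdef] using this.le
  -- the segment
  set c : ℂ := z₂ - z₁ with hc
  set L : ℝ := ‖c‖ with hLdef
  have hL : 0 < L := by
    simp only [hLdef, hc, norm_pos_iff, sub_ne_zero]
    exact fun h => hne h.symm
  set γ : ℝ → ℂ := fun t => z₁ + t • c with hγ
  have hmem : ∀ t ∈ Icc (0:ℝ) 1, γ t ∈ closure S := fun t ht =>
    ((convex_halfSpace_im_gt 0).closure).add_smul_sub_mem hz₁ hz₂ ht
  have hγcont : Continuous γ := continuous_const.add (continuous_id.smul continuous_const)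
  -- chain rule
  have hderiv : ∀ t ∈ uIcc (0:ℝ) 1,
      HasDerivAt (fun s => f (γ s)) (deriv f (γ t) * c) t := by
    intro t ht
    rw [uIcc_of_le zero_le_one] at ht
    have hfd : HasDerivAt f (deriv f (γ t)) (γ t) :=
      (hf.differentiableAt (hU.mem_nhds (hUH (hmem t ht)))).hasDerivAt
    have hγd : HasDerivAt γ c t := by
      simpa [hγ] using ((hasDerivAt_id t).smul_const c).const_add z₁
    have := hfd.scomp_of_eq t hγd rfl
    rw [smul_eq_mul, mul_comm] at this; exact this
  -- integrability
  have hcontI : ContinuousOn (fun t : ℝ => deriv f (γ t) * c) (uIcc (0:ℝ) 1) := by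
    rw [uIcc_of_le zero_le_one]
    exact (hdc.comp hγcont.continuousOn (fun t ht => hUH (hmem t ht))).mul continuousOn_const
  have hInt : IntervalIntegrable (fun t : ℝ => deriv f (γ t) * c) volume 0 1 :=
    hcontI.intervalIntegrable
  -- FTC
  have hFTC : ∫ t in (0:ℝ)..1, deriv f (γ t) * c = f z₂ - f z₁ := by
    have := intervalIntegral.integral_eq_sub_of_hasDerivAt hderiv hInt
    rw [this]
    simp [hγ, hc]
  -- subtract the constant b₀ * c
  have hIntConst : IntervalIntegrable (fun _ : ℝ => b₀ * c) volume 0 1 :=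
    intervalIntegrable_const
  have hsplit : ∫ t in (0:ℝ)..1, (deriv f (γ t) - b₀) * c = -(b₀ * c) := by
    have : (fun t : ℝ => (deriv f (γ t) - b₀) * c)
        = fun t : ℝ => deriv f (γ t) * c - b₀ * c := by
      funext t; ring
    rw [this, intervalIntegral.integral_sub hInt hIntConst, hFTC, heq]
    simp
  -- switch to a set integral
  set h : ℝ → ℂ := fun t => (deriv f (γ t) - b₀) * c with hh
  have hIoc : ∫ t in Ioc (0:ℝ) 1, h t = -(b₀ * c) := by
    rw [← hsplit, intervalIntegral.integral_of_le zero_le_one]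
  have hIntOn : IntegrableOn h (Ioc (0:ℝ) 1) := by
    have : IntervalIntegrable h volume 0 1 := hInt.sub hIntConst |>.congr ?_
    · exact this.1
    · intro t _
      simp [hh]; ring
  -- bad set
  set bad : Set ℝ := {t : ℝ | ‖γ t‖ ≤ R} with hbad
  have hbadMeas : MeasurableSet bad :=
    (isClosed_le (hγcont.norm) continuous_const).measurableSet
  set A : Set ℝ := Ioc (0:ℝ) 1 ∩ bad with hA
  set G : Set ℝ := Ioc (0:ℝ) 1 \ bad with hG
  have hAmeas : MeasurableSet A := measurableSet_Ioc.inter hbadMeas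
  have hAfin : volume A < ⊤ :=
    lt_of_le_of_lt (measure_mono inter_subset_left) measure_Ioc_lt_top
  have hGfin : volume G < ⊤ :=
    lt_of_le_of_lt (measure_mono diff_subset) measure_Ioc_lt_top
  set a : ℝ := (volume A).toReal with ha
  have ha0 : 0 ≤ a := ENNReal.toReal_nonneg
  have hsum : a + (volume G).toReal = 1 := by
    rw [ha, ← ENNReal.toReal_add hAfin.ne hGfin.ne]
    rw [hA, hG, measure_inter_add_diff _ hbadMeas]
    simp [Real.volume_Ioc]
  have hGvol : (volume G).toReal = 1 - a := by linarith
  -- pointwise bounds and integral estimates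
  have hbadBound : ∀ t ∈ A, ‖h t‖ ≤ (M' + B) * L := by
    intro t ht
    have htI : t ∈ Icc (0:ℝ) 1 := Ioc_subset_Icc_self ht.1
    have h1' := h1 _ (hmem t htI)
    rw [hh]
    rw [norm_mul, ← hLdef]
    have : ‖deriv f (γ t) - b₀‖ ≤ M' + B := by
      calc ‖deriv f (γ t) - b₀‖ ≤ ‖deriv f (γ t)‖ + ‖b₀‖ := norm_sub_le _ _
        _ ≤ M' + B := by rw [← hBdef]; linarith
    exact mul_le_mul_of_nonneg_right this (norm_nonneg _) |>.trans_eq rfl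
  have hgoodBound : ∀ t ∈ G, ‖h t‖ ≤ (B / 2) * L := by
    intro t ht
    have htI : t ∈ Icc (0:ℝ) 1 := Ioc_subset_Icc_self ht.1
    have hRt : R ≤ ‖γ t‖ := le_of_not_ge ht.2
    have h2' := h2 _ (hmem t htI) hRt
    rw [hh, norm_mul, ← hLdef]
    exact mul_le_mul_of_nonneg_right h2' (norm_nonneg _)
  have hnormA : ‖∫ t in A, h t‖ ≤ (M' + B) * L * a :=
    norm_setIntegral_le_of_norm_le_const hAfin hbadBound
  have hnormG : ‖∫ t in G, h t‖ ≤ (B / 2) * L * (volume G).toReal :=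
    norm_setIntegral_le_of_norm_le_const hGfin hgoodBound
  have hsplitInt : (∫ t in A, h t) + ∫ t in G, h t = ∫ t in Ioc (0:ℝ) 1, h t := by
    rw [hA, hG]
    exact integral_inter_add_diff hbadMeas hIntOn
  -- main estimate
  have hmain : B * L ≤ (M' + B) * L * a + (B / 2) * L * (1 - a) := by
    have : ‖∫ t in Ioc (0:ℝ) 1, h t‖ = B * L := by
      rw [hIoc, norm_neg, norm_mul, ← hBdef, ← hLdef]
    calc B * L = ‖(∫ t in A, h t) + ∫ t in G, h t‖ := by rw [hsplitInt, this]
      _ ≤ ‖∫ t in A, h t‖ + ‖∫ t in G, h t‖ := norm_add_le _ _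
      _ ≤ (M' + B) * L * a + (B / 2) * L * (volume G).toReal := add_le_add hnormA hnormG
      _ = (M' + B) * L * a + (B / 2) * L * (1 - a) := by rw [hGvol]
  -- conclude, by cases on whether the segment meets the disk
  rcases eq_empty_or_nonempty A with hAe | ⟨t₀, ht₀⟩
  · have ha' : a = 0 := by rw [ha, hAe]; simp
    rw [ha'] at hmain
    nlinarith
  · -- the bad set has small measure
    have haLe : a * L ≤ 2 * R := by
      have hdiam : volume A ≤ ENNReal.ofReal (2 * R / L) := by
        refine (Real.volume_le_diam A).trans (EMetric.diam_le ?_)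
        intro x hx y hy
        rw [edist_dist]
        refine ENNReal.ofReal_le_ofReal ?_
        rw [Real.dist_eq]
        have hxy : ‖γ x - γ y‖ ≤ 2 * R := by
          calc ‖γ x - γ y‖ ≤ ‖γ x‖ + ‖γ y‖ := norm_sub_le _ _
            _ ≤ 2 * R := by
                have hbx : ‖γ x‖ ≤ R := hx.2
                have hby : ‖γ y‖ ≤ R := hy.2
                linarith
        have hxy2 : ‖γ x - γ y‖ = |x - y| * L := by
          rw [hγ]
          simp only [add_sub_add_left_eq_sub, ← sub_smul]
          rw [norm_smul, Real.norm_eq_abs, hLdef]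
        rw [le_div_iff₀ hL, ← hxy2]
        exact hxy
      have := ENNReal.toReal_le_of_le_ofReal (by positivity) hdiam
      rw [← ha] at this
      calc a * L ≤ (2 * R / L) * L := mul_le_mul_of_nonneg_right this hL.le
        _ = 2 * R := by field_simp
    -- the segment is long
    have hLlong : (T - 1) * R ≤ L := by
      have hbt : ‖γ t₀‖ ≤ R := ht₀.2
      have ht01 : t₀ ∈ Ioc (0:ℝ) 1 := ht₀.1
      have hz2γ : ‖z₂ - γ t₀‖ = (1 - t₀) * L := by
        have : z₂ - γ t₀ = (1 - t₀) • c := by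
          rw [hγ, hc]
          push_cast
          module
        rw [this, norm_smul, Real.norm_eq_abs, _root_.abs_of_nonneg (by linarith [ht01.2]), hLdef]
      have hlow : T * R - R ≤ ‖z₂ - γ t₀‖ := by
        have := norm_sub_norm_le z₂ (γ t₀)  -- ‖z₂‖ - ‖γ t₀‖ ≤ ‖z₂ - γ t₀‖
        have hz2 : T * R ≤ ‖z₂‖ := by exact hTR
        linarith [norm_sub_norm_le z₂ (γ t₀)]
      have : T * R - R ≤ (1 - t₀) * L := by rw [← hz2γ]; exact hlow
      nlinarith [ht01.1, ht01.2, hL]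
    -- numerical contradiction
    have hTB : 4 * M' < (T - 3) * B := by
      have : 4 * M' / B < T - 3 := by
        rw [hBdef]; linarith
      calc 4 * M' = (4 * M' / B) * B := by field_simp
        _ < (T - 3) * B := mul_lt_mul_of_pos_right this hB
    have hkey : (B / 2) * L ≤ 2 * R * M' + B * R := by nlinarith
    nlinarith
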